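/- Fix an integer N ≥ 1, c₁, …, c_N ∈ ℂ with c_j ≠ 1, and μ ∈ ℂ, μ ≠ 0. For τ ∈ ℂ set z(τ) = i·μ·τ·∏_{j=1}^N ((1 − c_j)τ² − 1), w(τ) = −μ²(τ² − 1)·∏_{j=1}^N ((1 − c_j)τ² − 1)², and for each choice of sign set z₀±(τ) = ((τ ± 1)/τ)·z(τ). Then for every τ ∈ ℂ with τ ≠ 0 one has w(τ) = 2·z(τ)·z₀±(τ) − z₀±(τ)²; that is, the point (z(τ), w(τ)) lies on the line tangent to the parabola {w = z²} at the point (z₀±(τ), z₀±(τ)²). -/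

import Mathlib

/-- Type a1 dual billiards: the point `(z(τ), w(τ))` of the level curve lies on the
tangent line to the parabola `{w = z²}` at the point with abscissa `z₀± = ((τ ± 1)/τ)·z(τ)`. -/
theorem stmt_1 (N : ℕ) (hN : 1 ≤ N) (c : Fin N → ℂ) (hc : ∀ j, c j ≠ 1)
    (μ : ℂ) (hμ : μ ≠ 0)
    (z w : ℂ → ℂ)
    (hz : ∀ τ : ℂ, z τ = Complex.I * μ * τ * ∏ j, ((1 - c j) * τ ^ 2 - 1))
    (hw : ∀ τ : ℂ, w τ = -μ ^ 2 * (τ ^ 2 - 1) * ∏ j, ((1 - c j) * τ ^ 2 - 1) ^ 2)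
    (τ : ℂ) (hτ : τ ≠ 0)
    (ε : ℂ) (hε : ε = 1 ∨ ε = -1)
    (z₀ : ℂ) (hz₀ : z₀ = ((τ + ε) / τ) * z τ) :
    w τ = 2 * z τ * z₀ - z₀ ^ 2 := by
  have hprod : ∏ j, ((1 - c j) * τ ^ 2 - 1) ^ 2
      = (∏ j, ((1 - c j) * τ ^ 2 - 1)) ^ 2 := by
    rw [Finset.prod_pow]
  have hI : Complex.I ^ 2 = -1 := Complex.I_sq
  rw [hz₀, hz, hw, hprod]
  set P := ∏ j, ((1 - c j) * τ ^ 2 - 1) with hP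
  rcases hε with h | h <;> subst h <;> field_simp <;>
    linear_combination (1 - τ ^ 2) * P ^ 2 * hI
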